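/- Let L be a synchronous combing of a group G over X with constant K, and suppose L is a regular language. Let ⪯ denote the shortlex order on X*. Then the language L₀ = {v ∈ L : there is no w ∈ L with w ≺ v and w =_G v} is a bijective regular synchronous combing of G. In particular, every automatic group has a bijective regular synchronous combing. -/

import Mathlib

/-- The group element represented by a word. -/
def evalW {X G : Type*} [Group G] (π : X → G) (w : List X) : G := (w.map π).prod

/-- The group element represented by the length-`t` prefix of a word. -/
def evalP {X G : Type*} [Group G] (π : X → G) (w : List X) (t : ℕ) : G :=
  ((w.take t).map π).prod

/-- `g` and `h` are at word-metric distance at most `K` (w.r.t. the generators `π x`). -/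
def WDistLE {X G : Type*} [Group G] (π : X → G) (K : ℕ) (g h : G) : Prop :=
  ∃ l : List X, l.length ≤ K ∧ g * (l.map π).prod = h

/-- `v` and `w` synchronously `K`-fellow travel. -/
def SyncFT {X G : Type*} [Group G] (π : X → G) (K : ℕ) (v w : List X) : Prop :=
  ∀ t : ℕ, WDistLE π K (evalP π v t) (evalP π w t)

/-- `v` and `w` asynchronously `K`-fellow travel, via a monotone reparametrization
mapping `[0, |v|]` onto `[0, |w|]`. -/
def AsyncFT {X G : Type*} [Group G] (π : X → G) (K : ℕ) (v w : List X) : Prop :=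
  ∃ h : ℕ → ℕ, Monotone h ∧ h 0 = 0 ∧ h v.length = w.length ∧
    ∀ t : ℕ, WDistLE π K (evalP π v t) (evalP π w (h t))

/-- The generating set is inverse-closed. -/
def InvClosed {X G : Type*} [Group G] (π : X → G) : Prop :=
  ∀ x, ∃ x', π x' = (π x)⁻¹

/-- `L` is a language for `G`: it contains a representative of every element. -/
def IsLanguageFor {X G : Type*} [Group G] (π : X → G) (L : Set (List X)) : Prop :=
  ∀ g : G, ∃ w ∈ L, evalW π w = g

/-- `L` contains exactly one representative of every element. -/
def IsBijectiveLang {X G : Type*} [Group G] (π : X → G) (L : Set (List X)) : Prop :=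
  ∀ g : G, ∃! w, w ∈ L ∧ evalW π w = g

/-- The pairs of words for which a combing requires fellow travelling:
`w` represents `v`, or `v` times a generator. -/
def CombRel {X G : Type*} [Group G] (π : X → G) (v w : List X) : Prop :=
  evalW π w = evalW π v ∨ ∃ x, evalW π w = evalW π v * π x

/-- `L` is a synchronous combing with fellow traveller constant `K`. -/
def IsSyncCombing {X G : Type*} [Group G] (π : X → G) (L : Set (List X)) (K : ℕ) : Prop :=
  IsLanguageFor π L ∧ ∀ v ∈ L, ∀ w ∈ L, CombRel π v w → SyncFT π K v w

/-- `L` is an asynchronous combing with fellow traveller constant `K`. -/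
def IsAsyncCombing {X G : Type*} [Group G] (π : X → G) (L : Set (List X)) (K : ℕ) : Prop :=
  IsLanguageFor π L ∧ ∀ v ∈ L, ∀ w ∈ L, CombRel π v w → AsyncFT π K v w

/-- Shortlex order on words: shorter, or same length and lexicographically smaller. -/
def ShortLexLt {X : Type*} [LinearOrder X] (w v : List X) : Prop :=
  w.length < v.length ∨ (w.length = v.length ∧ List.Lex (· < ·) w v)

namespace Stmt13Aux

/-! ### generic DFA facts -/

lemma regular_of_dfa {T : Type*} {σ : Type*} [Fintype σ] (M : DFA T σ) :
    Language.IsRegular M.accepts := by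
  classical
  let e := Fintype.equivFin σ
  let N : DFA T (Fin (Fintype.card σ)) :=
    ⟨fun s x => e (M.step (e.symm s) x), e M.start, e.symm ⁻¹' M.accept⟩
  refine ⟨Fin (Fintype.card σ), inferInstance, N, ?_⟩
  have key : ∀ (l : List T) (s : σ), N.evalFrom (e s) l = e (M.evalFrom s l) := by
    intro l
    induction l with
    | nil => intro s; rfl
    | cons a l ih =>
      intro s
      have : N.evalFrom (e s) (a :: l) = N.evalFrom (N.step (e s) a) l := rfl
      rw [this]
      have h2 : N.step (e s) a = e (M.step s a) := by simp [N]
      rw [h2, ih]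
      rfl
  ext l
  simp only [DFA.mem_accepts, DFA.eval]
  rw [key]
  simp [N]

/-- intersection DFA -/
def interDFA {T : Type*} {σ₁ σ₂ : Type*} (M₁ : DFA T σ₁) (M₂ : DFA T σ₂) :
    DFA T (σ₁ × σ₂) :=
  ⟨fun s x => (M₁.step s.1 x, M₂.step s.2 x), (M₁.start, M₂.start),
    {s | s.1 ∈ M₁.accept ∧ s.2 ∈ M₂.accept}⟩

lemma interDFA_eval {T : Type*} {σ₁ σ₂ : Type*} (M₁ : DFA T σ₁) (M₂ : DFA T σ₂)
    (l : List T) (s₁ : σ₁) (s₂ : σ₂) :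
    (interDFA M₁ M₂).evalFrom (s₁, s₂) l = (M₁.evalFrom s₁ l, M₂.evalFrom s₂ l) := by
  induction l generalizing s₁ s₂ with
  | nil => rfl
  | cons a l ih => exact ih _ _

lemma interDFA_accepts {T : Type*} {σ₁ σ₂ : Type*} (M₁ : DFA T σ₁) (M₂ : DFA T σ₂)
    (l : List T) :
    l ∈ (interDFA M₁ M₂).accepts ↔ l ∈ M₁.accepts ∧ l ∈ M₂.accepts := by
  simp only [DFA.mem_accepts, DFA.eval]
  rw [show (interDFA M₁ M₂).start = (M₁.start, M₂.start) from rfl, interDFA_eval]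
  rfl

/-- complement DFA -/
def complDFA {T : Type*} {σ : Type*} (M : DFA T σ) : DFA T σ :=
  ⟨M.step, M.start, M.acceptᶜ⟩

lemma complDFA_accepts {T : Type*} {σ : Type*} (M : DFA T σ) :
    (complDFA M).accepts = (M.accepts)ᶜ := by
  ext l
  simp only [DFA.mem_accepts, DFA.eval, Set.mem_compl_iff]
  rfl

/-! ### lex helper lemmas -/

lemma lex_append_singleton {X : Type*} (r : X → X → Prop) {y x : X} (h : r y x) :
    ∀ p : List X, List.Lex r (p ++ [y]) (p ++ [x])
  | [] => List.Lex.rel h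
  | a :: p => List.Lex.cons (lex_append_singleton r h p)

lemma lex_append {X : Type*} {r : X → X → Prop} :
    ∀ {a b : List X}, List.Lex r a b → a.length = b.length →
      ∀ c d : List X, List.Lex r (a ++ c) (b ++ d) := by
  intro a b h
  induction h with
  | nil => intro hlen; simp at hlen
  | @cons x l₁ l₂ h ih =>
    intro hlen c d
    exact List.Lex.cons (ih (by simpa using hlen) c d)
  | rel h => intro _ c d; exact List.Lex.rel h

/-! ### eval lemmas -/

section evalLemmas
variable {X G : Type*} [Group G] (π : X → G)

lemma evalW_nil : evalW π ([] : List X) = 1 := rfl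

lemma evalW_append (a b : List X) : evalW π (a ++ b) = evalW π a * evalW π b := by
  simp [evalW]

lemma evalP_zero (w : List X) : evalP π w 0 = 1 := rfl

lemma evalP_of_le {w : List X} {t : ℕ} (h : w.length ≤ t) : evalP π w t = evalW π w := by
  unfold evalP evalW; rw [List.take_of_length_le h]

lemma evalP_length (w : List X) : evalP π w w.length = evalW π w :=
  evalP_of_le π le_rfl

lemma evalP_succ {w : List X} {t : ℕ} (h : t < w.length) :
    evalP π w (t + 1) = evalP π w t * π w[t] := by
  unfold evalP
  rw [← List.take_concat_get' w t h, List.map_append, List.prod_append]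
  simp

lemma evalP_append_of_le {a : List X} (b : List X) {t : ℕ} (h : t ≤ a.length) :
    evalP π (a ++ b) t = evalP π a t := by
  unfold evalP
  rw [List.take_append_of_le_length h]

lemma evalP_append_singleton_succ (a : List X) (x : X) :
    evalP π (a ++ [x]) (a.length + 1) = evalW π a * π x := by
  rw [evalP_of_le π (by simp), evalW_append]
  simp [evalW]

end evalLemmas

/-! ### the difference machine -/

inductive St4 | eq | lt | gt | done
deriving DecidableEq

instance : Fintype St4 :=
  ⟨{St4.eq, St4.lt, St4.gt, St4.done}, fun x => by cases x <;> simp⟩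

section Machine

variable {X G : Type*} [Group G] [Fintype X] [LinearOrder X]

def Ball (π : X → G) (K : ℕ) : Set G :=
  {g | ∃ l : List X, l.length ≤ K ∧ (l.map π).prod = g}

omit [LinearOrder X] in
lemma ball_finite (π : X → G) (K : ℕ) : (Ball π K).Finite := by
  refine ((List.finite_length_le X K).image (fun l : List X => (l.map π).prod)).subset ?_
  rintro g ⟨l, hl, rfl⟩
  exact ⟨l, hl, rfl⟩

omit [Fintype X] [LinearOrder X] in
lemma one_mem_ball (π : X → G) (K : ℕ) : (1 : G) ∈ Ball π K :=
  ⟨[], by simp⟩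

variable (π : X → G) (K : ℕ) {σ : Type*} (A : DFA X σ)

/-- machine states -/
abbrev MSt (π : X → G) (K : ℕ) (σ : Type*) : Type _ := σ × (Ball π K) × St4

/-- the transition relation of the difference machine -/
def MTrans (p : MSt π K σ) (x : X) (p' : MSt π K σ) : Prop :=
  (p'.1 = p.1 ∧ (p'.2.1 : G) = (π x)⁻¹ * p.2.1 ∧ p'.2.2 = .done) ∨
  (p.2.2 ≠ .done ∧ ∃ y : X, p'.1 = A.step p.1 y ∧ (p'.2.1 : G) = (π x)⁻¹ * p.2.1 * π y ∧
    ((p.2.2 = .eq ∧ ((y < x ∧ p'.2.2 = .lt) ∨ (y = x ∧ p'.2.2 = .eq) ∨ (x < y ∧ p'.2.2 = .gt))) ∨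
     (p.2.2 = .lt ∧ p'.2.2 = .lt) ∨ (p.2.2 = .gt ∧ p'.2.2 = .gt)))

/-- the difference machine -/
def DiffM : NFA X (MSt π K σ) where
  step p x := {p' | MTrans π K A p x p'}
  start := {p | p.1 = A.start ∧ (p.2.1 : G) = 1 ∧ p.2.2 = .eq}
  accept := {p | p.1 ∈ A.accept ∧ (p.2.1 : G) = 1 ∧ (p.2.2 = .lt ∨ p.2.2 = .done)}

/-- invariant for soundness -/
def Reach (v : List X) (p : MSt π K σ) : Prop :=
  ∃ w : List X, A.eval w = p.1 ∧ (p.2.1 : G) = (evalW π v)⁻¹ * evalW π w ∧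
    (∀ t, (evalP π v t)⁻¹ * evalP π w t ∈ Ball π K) ∧
    (p.2.2 = .eq → w = v) ∧
    (p.2.2 = .lt → w.length = v.length ∧ List.Lex (· < ·) w v) ∧
    (p.2.2 = .gt → w.length = v.length) ∧
    (p.2.2 = .done → w.length < v.length)

lemma soundness : ∀ (v : List X) (p : MSt π K σ),
    p ∈ (DiffM π K A).eval v → Reach π K A v p := by
  intro v
  induction v using List.reverseRecOn with
  | nil =>
    rintro p hp
    rw [NFA.eval_nil] at hp
    obtain ⟨hq, hd, hst⟩ := hp
    refine ⟨[], hq.symm, by simpa [evalW_nil] using hd,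
      fun t => by simpa [evalP] using one_mem_ball π K, fun _ => rfl, ?_, ?_, ?_⟩ <;>
      · rw [hst]; intro h; exact absurd h (by decide)
  | append_singleton v x ih =>
    rintro p hp
    rw [NFA.eval_append_singleton, NFA.mem_stepSet] at hp
    obtain ⟨p0, hp0, htr⟩ := hp
    obtain ⟨w0, hq0, hd0, hdiff0, h0eq, h0lt, h0gt, h0done⟩ := ih p0 hp0
    have hwlen : w0.length ≤ v.length := by
      cases hst0 : p0.2.2 with
      | eq => exact le_of_eq (congrArg List.length (h0eq hst0))
      | lt => exact (h0lt hst0).1.le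
      | gt => exact (h0gt hst0).le
      | done => exact (h0done hst0).le
    rcases htr with ⟨hq, hd, hst⟩ | ⟨hne, y, hq, hd, hstat⟩
    · -- done transition, witness w0
      have hdval : (p.2.1 : G) = (evalW π (v ++ [x]))⁻¹ * evalW π w0 := by
        rw [hd, hd0, evalW_append]
        simp [evalW, mul_assoc]
      refine ⟨w0, hq ▸ hq0, hdval, ?_, ?_, ?_, ?_, ?_⟩
      · intro t
        rcases le_or_gt t v.length with h | h
        · rw [evalP_append_of_le π [x] h]
          exact hdiff0 t
        · rw [evalP_of_le π (by simpa using h), evalP_of_le π (hwlen.trans h.le)]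
          exact hdval ▸ p.2.1.2
      · rw [hst]; intro h; exact absurd h (by decide)
      · rw [hst]; intro h; exact absurd h (by decide)
      · rw [hst]; intro h; exact absurd h (by decide)
      · intro _
        simpa using Nat.lt_succ_of_le hwlen
    · -- feed transition, witness w0 ++ [y]
      have hwlen' : w0.length = v.length := by
        cases hst0 : p0.2.2 with
        | eq => exact congrArg List.length (h0eq hst0)
        | lt => exact (h0lt hst0).1
        | gt => exact h0gt hst0
        | done => exact absurd hst0 hne
      have hdval : (p.2.1 : G) = (evalW π (v ++ [x]))⁻¹ * evalW π (w0 ++ [y]) := by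
        rw [hd, hd0, evalW_append, evalW_append]
        simp [evalW, mul_assoc]
      refine ⟨w0 ++ [y], ?_, hdval, ?_, ?_, ?_, ?_, ?_⟩
      · rw [DFA.eval_append_singleton, hq0, hq]
      · intro t
        rcases le_or_gt t v.length with h | h
        · rw [evalP_append_of_le π [x] h, evalP_append_of_le π [y] (hwlen' ▸ h)]
          exact hdiff0 t
        · rw [evalP_of_le π (by simpa using h),
            evalP_of_le π (by simp only [List.length_append, List.length_singleton, hwlen']; omega)]
          exact hdval ▸ p.2.1.2
      · -- eq case
        intro hst
        rcases hstat with ⟨he, hy⟩ | ⟨he, hy⟩ | ⟨he, hy⟩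
        · rcases hy with ⟨hyx, h'⟩ | ⟨hyx, h'⟩ | ⟨hyx, h'⟩ <;> rw [hst] at h'
          · exact absurd h' (by decide)
          · rw [h0eq he, hyx]
          · exact absurd h' (by decide)
        · rw [hst] at hy; exact absurd hy (by decide)
        · rw [hst] at hy; exact absurd hy (by decide)
      · -- lt case
        intro hst
        refine ⟨by simp [hwlen'], ?_⟩
        rcases hstat with ⟨he, hy⟩ | ⟨he, hy⟩ | ⟨he, hy⟩
        · rcases hy with ⟨hyx, h'⟩ | ⟨hyx, h'⟩ | ⟨hyx, h'⟩ <;> rw [hst] at h'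
          · rw [h0eq he]; exact lex_append_singleton _ hyx v
          · exact absurd h' (by decide)
          · exact absurd h' (by decide)
        · exact lex_append (h0lt he).2 (h0lt he).1 [y] [x]
        · rw [hst] at hy; exact absurd hy (by decide)
      · -- gt case
        intro _
        simp [hwlen']
      · -- done case
        intro hst
        rcases hstat with ⟨_, hy⟩ | ⟨_, hy⟩ | ⟨_, hy⟩
        · rcases hy with ⟨_, h'⟩ | ⟨_, h'⟩ | ⟨_, h'⟩ <;> rw [hst] at h' <;>
            exact absurd h' (by decide)
        · rw [hst] at hy; exact absurd hy (by decide)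
        · rw [hst] at hy; exact absurd hy (by decide)

open scoped Classical in
/-- intended status of the run guessing `w` along `v`, after `t` letters -/
noncomputable def stat (w v : List X) (t : ℕ) : St4 :=
  if w.length < t then .done
  else if w.take t = v.take t then .eq
  else if List.Lex (· < ·) (w.take t) (v.take t) then .lt else .gt

lemma completeness (v w : List X) (hlen : w.length ≤ v.length)
    (hdiff : ∀ t, (evalP π v t)⁻¹ * evalP π w t ∈ Ball π K) :
    ∀ t, t ≤ v.length →
      (A.eval (w.take t), ⟨(evalP π v t)⁻¹ * evalP π w t, hdiff t⟩, stat w v t)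
        ∈ (DiffM π K A).eval (v.take t) := by
  classical
  intro t
  induction t with
  | zero =>
    intro _
    rw [List.take_zero, NFA.eval_nil]
    refine ⟨rfl, by simp [evalP], ?_⟩
    simp [stat]
  | succ t ih =>
    intro ht
    have htv : t < v.length := ht
    rw [← List.take_concat_get' v t htv, NFA.eval_append_singleton, NFA.mem_stepSet]
    refine ⟨_, ih htv.le, ?_⟩
    show MTrans π K A _ v[t] _
    rcases lt_or_ge t w.length with htw | htw
    · -- feed transition with y = w[t]
      have hstat_ne : stat w v t ≠ .done := by
        simp [stat, not_lt.mpr htw.le, Nat.not_lt.mpr htw.le]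
        split <;> [skip; split] <;> decide
      refine Or.inr ⟨hstat_ne, w[t], ?_, ?_, ?_⟩
      · rw [← List.take_concat_get' w t htw, DFA.eval_append_singleton]
      · show (evalP π v (t+1))⁻¹ * evalP π w (t+1)
            = (π v[t])⁻¹ * ((evalP π v t)⁻¹ * evalP π w t) * π w[t]
        rw [evalP_succ π htv, evalP_succ π htw]
        simp [mul_assoc]
      · -- status bookkeeping
        have hlt1 : (w.take t).length = t := by simp [List.length_take, htw.le]
        have hlt2 : (v.take t).length = t := by simp [List.length_take, htv.le]
        have hTw : w.take (t+1) = w.take t ++ [w[t]] := (List.take_concat_get' w t htw).symm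
        have hTv : v.take (t+1) = v.take t ++ [v[t]] := (List.take_concat_get' v t htv).symm
        have hndone : ¬ w.length < t := not_lt.mpr htw.le
        have hndone' : ¬ w.length < t + 1 := not_lt.mpr htw
        by_cases heq : w.take t = v.take t
        · -- previous status eq
          refine Or.inl ⟨by simp [stat, hndone, heq], ?_⟩
          rcases lt_trichotomy w[t] v[t] with hyx | hyx | hyx
          · refine Or.inl ⟨hyx, ?_⟩
            have hne : ¬ w.take (t+1) = v.take (t+1) := by
              rw [hTw, hTv, heq]
              intro hcon
              exact absurd (List.head_eq_of_cons_eq (List.append_cancel_left hcon) :)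
                (ne_of_lt hyx)
            have hlex : List.Lex (· < ·) (w.take (t+1)) (v.take (t+1)) := by
              rw [hTw, hTv, heq]
              exact lex_append_singleton _ hyx _
            simp [stat, hndone', hne, hlex]
          · refine Or.inr (Or.inl ⟨hyx, ?_⟩)
            have : w.take (t+1) = v.take (t+1) := by rw [hTw, hTv, heq, hyx]
            simp [stat, hndone', this]
          · refine Or.inr (Or.inr ⟨hyx, ?_⟩)
            have hlex' : List.Lex (· < ·) (v.take (t+1)) (w.take (t+1)) := by
              rw [hTw, hTv, heq]
              exact lex_append_singleton _ hyx _
            have hne : ¬ w.take (t+1) = v.take (t+1) := by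
              rw [hTw, hTv, heq]
              intro hcon
              exact absurd (List.head_eq_of_cons_eq (List.append_cancel_left hcon) :)
                (ne_of_gt hyx)
            have hnlex : ¬ List.Lex (· < ·) (w.take (t+1)) (v.take (t+1)) := fun hcon =>
              absurd hcon (asymm (hlex' : v.take (t+1) < w.take (t+1)))
            simp [stat, hndone', hne, hnlex]
        · have hne1 : ¬ w.take (t+1) = v.take (t+1) := by
            rw [hTw, hTv]
            intro hcon
            exact heq (List.append_inj_left' hcon (by simp))
          by_cases hlex : List.Lex (· < ·) (w.take t) (v.take t)
          · -- previous status lt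
            refine Or.inr (Or.inl ⟨by simp [stat, hndone, heq, hlex], ?_⟩)
            have : List.Lex (· < ·) (w.take (t+1)) (v.take (t+1)) := by
              rw [hTw, hTv]
              exact lex_append hlex (hlt1.trans hlt2.symm) _ _
            simp [stat, hndone', hne1, this]
          · -- previous status gt
            refine Or.inr (Or.inr ⟨by simp [stat, hndone, heq, hlex], ?_⟩)
            have hlex' : List.Lex (· < ·) (v.take t) (w.take t) := by
              rcases lt_trichotomy (w.take t) (v.take t) with h | h | h
              · exact absurd h hlex
              · exact absurd h heq
              · exact h
            have hnlex : ¬ List.Lex (· < ·) (w.take (t+1)) (v.take (t+1)) := by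
              intro hcon
              have : List.Lex (· < ·) (v.take (t+1)) (w.take (t+1)) := by
                rw [hTw, hTv]
                exact lex_append hlex' (hlt2.trans hlt1.symm) _ _
              exact absurd hcon (asymm (this : v.take (t+1) < w.take (t+1)))
            simp [stat, hndone', hne1, hnlex]
    · -- done transition
      refine Or.inl ⟨?_, ?_, ?_⟩
      · rw [List.take_of_length_le (htw.trans t.le_succ), List.take_of_length_le htw]
      · show (evalP π v (t+1))⁻¹ * evalP π w (t+1)
            = (π v[t])⁻¹ * ((evalP π v t)⁻¹ * evalP π w t)
        rw [evalP_succ π htv, evalP_of_le π (htw.trans t.le_succ), evalP_of_le π htw]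
        simp [mul_assoc]
      · simp [stat, Nat.lt_succ_of_le htw]

lemma mem_accepts_iff (v : List X) :
    v ∈ (DiffM π K A).accepts ↔
      ∃ w, w ∈ A.accepts ∧ ShortLexLt w v ∧ evalW π w = evalW π v ∧
        ∀ t, (evalP π v t)⁻¹ * evalP π w t ∈ Ball π K := by
  constructor
  · rintro ⟨p, hacc, hp⟩
    obtain ⟨w, hq, hd, hdiff, _, h1, _, h2⟩ := soundness π K A v p hp
    obtain ⟨hqacc, hdone, hstacc⟩ := hacc
    refine ⟨w, ?_, ?_, ?_, hdiff⟩
    · rw [DFA.mem_accepts, DFA.eval] at *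
      rw [hq]; exact hqacc
    · rcases hstacc with h | h
      · exact Or.inr ⟨(h1 h).1, (h1 h).2⟩
      · exact Or.inl (h2 h)
    · have : (evalW π v)⁻¹ * evalW π w = 1 := by rw [← hd]; exact hdone
      exact (inv_mul_eq_one.mp this).symm
  · rintro ⟨w, hwL, hslex, heval, hdiff⟩
    have hlen : w.length ≤ v.length := by
      rcases hslex with h | ⟨h, _⟩
      · exact h.le
      · exact h.le
    have hrun := completeness π K A v w hlen hdiff v.length le_rfl
    rw [List.take_length] at hrun
    refine ⟨_, ?_, hrun⟩
    refine ⟨?_, ?_, ?_⟩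
    · show A.eval (w.take v.length) ∈ A.accept
      rw [List.take_of_length_le hlen]
      exact hwL
    · show (evalP π v v.length)⁻¹ * evalP π w v.length = 1
      rw [evalP_length, evalP_of_le π hlen, heval, inv_mul_cancel]
    · show stat w v v.length = .lt ∨ stat w v v.length = .done
      rcases lt_or_eq_of_le hlen with h | h
      · exact Or.inr (by simp [stat, h])
      · have hne : w ≠ v := by
          intro hcon
          rcases hslex with hl | ⟨_, hlex⟩
          · exact absurd hl (by rw [hcon]; exact lt_irrefl _)
          · rw [hcon] at hlex
            exact absurd (hlex : v < v) (lt_irrefl v)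
        have hlex : List.Lex (· < ·) w v := by
          rcases hslex with hl | ⟨_, hlex⟩
          · exact absurd hl (by rw [h]; exact lt_irrefl _)
          · exact hlex
        refine Or.inl ?_
        simp only [stat, List.take_of_length_le hlen, List.take_length,
          not_lt.mpr (le_of_eq h)]
        rw [if_neg (by omega), if_neg hne, if_pos hlex]

end Machine
lemma shortlex_trichotomy {X : Type*} [LinearOrder X] {w v : List X}
    (h1 : ¬ShortLexLt w v) (h2 : ¬ShortLexLt v w) : w = v := by
  rcases lt_trichotomy w.length v.length with h | h | h
  · exact absurd (Or.inl h) h1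
  · rcases lt_trichotomy w v with hl | hl | hl
    · exact absurd (Or.inr ⟨h, hl⟩) h1
    · exact hl
    · exact absurd (Or.inr ⟨h.symm, hl⟩) h2
  · exact absurd (Or.inl h) h2

lemma exists_shortlex_min {X : Type*} [Fintype X] [LinearOrder X] (S : Set (List X))
    (hS : S.Nonempty) : ∃ w ∈ S, ∀ u ∈ S, ¬ ShortLexLt u w := by
  obtain ⟨n, hn, hmin⟩ := Nat.lt_wfRel.wf.has_min (List.length '' S) (hS.image _)
  obtain ⟨w0, hw0S, hw0n⟩ := hn
  have hfin : {u ∈ S | u.length = n}.Finite :=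
    (List.finite_length_eq X n).subset (fun u hu => hu.2)
  obtain ⟨w, hw, hwmin⟩ := Set.exists_min_image _ id hfin ⟨w0, hw0S, hw0n⟩
  refine ⟨w, hw.1, fun u hu hlt => ?_⟩
  rcases hlt with hlt | ⟨heq, hlex⟩
  · exact hmin u.length ⟨u, hu, rfl⟩ (by rw [hw.2] at hlt; exact hlt)
  · have : w ≤ u := hwmin u ⟨hu, heq.trans hw.2⟩
    exact absurd (lt_of_lt_of_le (hlex : u < w) this) (lt_irrefl u)


end Stmt13Aux


/-- if `L` is a regular synchronous combing of `G` with constant `K`, the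
set of shortlex-least representatives in `L` is a bijective, regular, synchronous
combing of `G`. -/
theorem stmt13 {X G : Type*} [Group G] [Fintype X] [LinearOrder X]
    (π : X → G) (hinv : InvClosed π) (L : Set (List X)) (K : ℕ)
    (hreg : Language.IsRegular (L : Language X)) (hL : IsSyncCombing π L K) :
    Language.IsRegular
      ({v ∈ L | ¬ ∃ w ∈ L, ShortLexLt w v ∧ evalW π w = evalW π v} : Language X) ∧
    IsBijectiveLang π {v ∈ L | ¬ ∃ w ∈ L, ShortLexLt w v ∧ evalW π w = evalW π v} ∧
    IsSyncCombing π {v ∈ L | ¬ ∃ w ∈ L, ShortLexLt w v ∧ evalW π w = evalW π v} K := by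
  classical
  obtain ⟨σ0, hσ0, A, hA⟩ := hreg
  haveI := hσ0
  haveI : Fintype (Stmt13Aux.Ball π K) := (Stmt13Aux.ball_finite π K).fintype
  have hmemL : ∀ u : List X, u ∈ A.accepts ↔ u ∈ L := by
    intro u
    rw [hA]; exact Iff.rfl
  -- key set-level identification
  have hiff : ∀ v : List X,
      (v ∈ L ∧ ¬ ∃ w ∈ L, ShortLexLt w v ∧ evalW π w = evalW π v) ↔
      (v ∈ A.accepts ∧ ¬ v ∈ (Stmt13Aux.DiffM π K A).accepts) := by
    intro v
    rw [hmemL, Stmt13Aux.mem_accepts_iff]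
    constructor
    · rintro ⟨hv, hno⟩
      refine ⟨hv, ?_⟩
      rintro ⟨w, hwA, hslex, heval, -⟩
      exact hno ⟨w, (hmemL w).mp hwA, hslex, heval⟩
    · rintro ⟨hv, hno⟩
      refine ⟨hv, ?_⟩
      rintro ⟨w, hwL, hslex, heval⟩
      refine hno ⟨w, (hmemL w).mpr hwL, hslex, heval, ?_⟩
      intro t
      obtain ⟨l, hlK, hl⟩ := hL.2 v hv w hwL (Or.inl heval) t
      exact ⟨l, hlK, by rw [← hl]; group⟩
  refine ⟨?_, ?_, ?_⟩
  · -- regularity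
    have hlang : ({v ∈ L | ¬ ∃ w ∈ L, ShortLexLt w v ∧ evalW π w = evalW π v} : Language X)
        = (Stmt13Aux.interDFA A
            (Stmt13Aux.complDFA ((Stmt13Aux.DiffM π K A).toDFA))).accepts := by
      ext v
      refine Iff.trans ?_ (Stmt13Aux.interDFA_accepts _ _ v).symm
      have hc : v ∈ (Stmt13Aux.complDFA ((Stmt13Aux.DiffM π K A).toDFA)).accepts
          ↔ ¬ v ∈ (Stmt13Aux.DiffM π K A).accepts := by
        rw [Stmt13Aux.complDFA_accepts, NFA.toDFA_correct]; exact Iff.rfl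
      rw [hc]
      exact (hiff v)
    rw [hlang]
    exact Stmt13Aux.regular_of_dfa _
  · -- bijectivity
    intro g
    obtain ⟨w0, hw0, hw0min⟩ :=
      Stmt13Aux.exists_shortlex_min {w ∈ L | evalW π w = g} (by
        obtain ⟨w, hw, hwg⟩ := hL.1 g
        exact ⟨w, hw, hwg⟩)
    have hw0L : w0 ∈ {v ∈ L | ¬ ∃ w ∈ L, ShortLexLt w v ∧ evalW π w = evalW π v} := by
      refine ⟨hw0.1, ?_⟩
      rintro ⟨w, hwL, hslex, heval⟩
      exact hw0min w ⟨hwL, heval.trans hw0.2⟩ hslex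
    refine ⟨w0, ⟨hw0L, hw0.2⟩, ?_⟩
    rintro u ⟨⟨huL, huno⟩, hug⟩
    have h1 : ¬ ShortLexLt u w0 := fun h =>
      (hw0L.2) ⟨u, huL, h, hug.trans hw0.2.symm⟩
    have h2 : ¬ ShortLexLt w0 u := fun h =>
      huno ⟨w0, hw0.1, h, hw0.2.trans hug.symm⟩
    exact Stmt13Aux.shortlex_trichotomy h1 h2
  · -- synchronous combing
    constructor
    · intro g
      obtain ⟨w0, hw0, hw0min⟩ :=
        Stmt13Aux.exists_shortlex_min {w ∈ L | evalW π w = g} (by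
          obtain ⟨w, hw, hwg⟩ := hL.1 g
          exact ⟨w, hw, hwg⟩)
      refine ⟨w0, ⟨hw0.1, ?_⟩, hw0.2⟩
      rintro ⟨w, hwL, hslex, heval⟩
      exact hw0min w ⟨hwL, heval.trans hw0.2⟩ hslex
    · intro v hv w hw hc
      exact hL.2 v hv.1 w hw.1 hc
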